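/- Let a, l, c be positive integers and let A ∈ ℝ^{a×a}, B ∈ ℝ^{a×l}, C ∈ ℝ^{l×a}, D ∈ ℝ^{l×l}. Then there exist matrices Q₀, Q₁, …, Q_l ∈ ℝ^{a×a}, depending only on A, B, C, D, such that for every choice of initial matrices X₀ ∈ ℝ^{a×c}, Y₀ ∈ ℝ^{l×c}, the sequences defined by X_{n+1} = A·X_n + B·Y_n and Y_{n+1} = C·X_n + D·Y_n satisfy X_{n+l+1} = Σ_{i=0}^{l} Q_i·X_{n+i} for all n ≥ 0. That is, the observed block satisfies a matrix-coefficient linear recurrence of order l+1 whose order equals the number of latent dimensions plus one, obtained by eliminating Y via the Cayley–Hamilton theorem applied to D. -/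
import Mathlib

/-- **Cayley–Hamilton elimination of the latent block (left-acting version).**
Given `A ∈ ℝ^{a×a}`, `B ∈ ℝ^{a×l}`, `C ∈ ℝ^{l×a}`, `D ∈ ℝ^{l×l}`, there exist matrices
`Q₀, …, Q_l ∈ ℝ^{a×a}`, depending only on `A, B, C, D`, such that for every pair of
sequences satisfying `X_{n+1} = A·X_n + B·Y_n`, `Y_{n+1} = C·X_n + D·Y_n` (with arbitrary
initial `X₀, Y₀`), the observed block satisfies the order-`(l+1)` recurrence
`X_{n+l+1} = Σ_{i=0}^{l} Q_i·X_{n+i}` for all `n ≥ 0`. -/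
theorem latent_elimination_left (a l c : ℕ) (ha : 0 < a) (hl : 0 < l) (hc : 0 < c)
    (A : Matrix (Fin a) (Fin a) ℝ) (B : Matrix (Fin a) (Fin l) ℝ)
    (C : Matrix (Fin l) (Fin a) ℝ) (D : Matrix (Fin l) (Fin l) ℝ) :
    ∃ Q : Fin (l + 1) → Matrix (Fin a) (Fin a) ℝ,
      ∀ (X : ℕ → Matrix (Fin a) (Fin c) ℝ) (Y : ℕ → Matrix (Fin l) (Fin c) ℝ),
        (∀ n : ℕ, X (n + 1) = A * X n + B * Y n) →
        (∀ n : ℕ, Y (n + 1) = C * X n + D * Y n) →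
        ∀ n : ℕ, X (n + l + 1) = ∑ i : Fin (l + 1), Q i * X (n + (i : ℕ)) := by
  classical
  set p : ℕ → ℝ := fun k => D.charpoly.coeff k with hp
  have hdeg : D.charpoly.natDegree = l := by
    simpa using D.charpoly_natDegree_eq_dim
  have hmonic : p l = 1 := by
    have h := D.charpoly_monic
    rw [Polynomial.Monic, Polynomial.leadingCoeff, hdeg] at h
    exact h
  have hCH : ∑ k ∈ Finset.range (l + 1), p k • D ^ k = 0 := by
    have h := Matrix.aeval_self_charpoly D
    rwa [Polynomial.aeval_eq_sum_range, hdeg] at h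
  refine ⟨fun i => p i • A
      - (if (i : ℕ) = 0 then 0 else p ((i : ℕ) - 1) • (1 : Matrix (Fin a) (Fin a) ℝ))
      + B * (∑ k ∈ Finset.Ico ((i : ℕ) + 1) (l + 1), p k • D ^ (k - 1 - (i : ℕ))) * C, ?_⟩
  intro X Y hX hY n
  -- closed form for Y (n + k)
  have hYn : ∀ k, Y (n + k) =
      D ^ k * Y n + ∑ j ∈ Finset.range k, D ^ (k - 1 - j) * (C * X (n + j)) := by
    intro k
    induction k with
    | zero => simp
    | succ k ih =>
      have hnk : n + (k + 1) = (n + k) + 1 := by ring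
      rw [hnk, hY, ih, Matrix.mul_add, Matrix.mul_sum, Finset.sum_range_succ]
      have h1 : ∀ j ∈ Finset.range k,
          D * (D ^ (k - 1 - j) * (C * X (n + j))) = D ^ (k + 1 - 1 - j) * (C * X (n + j)) := by
        intro j hj
        rw [Finset.mem_range] at hj
        rw [← Matrix.mul_assoc, ← pow_succ']
        congr 2
        omega
      rw [Finset.sum_congr rfl h1]
      have h2 : D ^ (k + 1 - 1 - k) = 1 := by
        have : k + 1 - 1 - k = 0 := by omega
        rw [this, pow_zero]
      rw [h2, Matrix.one_mul, ← Matrix.mul_assoc, ← pow_succ']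
      abel
  have key : ∀ k, X (n + k + 1) = A * X (n + k) + B * (D ^ k * Y n)
      + ∑ j ∈ Finset.range k, B * (D ^ (k - 1 - j) * (C * X (n + j))) := by
    intro k
    rw [hX (n + k), hYn k, Matrix.mul_add, Matrix.mul_sum, add_assoc]
  -- the main summed identity
  have hS : X (n + l + 1) + ∑ k ∈ Finset.range l, p k • X (n + k + 1)
      = ∑ k ∈ Finset.range (l + 1), p k • X (n + k + 1) := by
    rw [Finset.sum_range_succ, hmonic, one_smul, add_comm]
  have hvanish : ∑ k ∈ Finset.range (l + 1), p k • (B * (D ^ k * Y n)) = 0 := by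
    have h1 : ∀ k, p k • (B * (D ^ k * Y n)) = B * ((p k • D ^ k) * Y n) := by
      intro k
      rw [Matrix.smul_mul, Matrix.mul_smul]
    simp_rw [h1]
    rw [← Matrix.mul_sum, ← Matrix.sum_mul, hCH, Matrix.zero_mul, Matrix.mul_zero]
  have hexp : ∑ k ∈ Finset.range (l + 1), p k • X (n + k + 1)
      = ∑ k ∈ Finset.range (l + 1), p k • (A * X (n + k))
      + ∑ k ∈ Finset.range (l + 1), ∑ j ∈ Finset.range k,
          p k • (B * (D ^ (k - 1 - j) * (C * X (n + j)))) := by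
    calc ∑ k ∈ Finset.range (l + 1), p k • X (n + k + 1)
        = ∑ k ∈ Finset.range (l + 1), (p k • (A * X (n + k)) + p k • (B * (D ^ k * Y n))
          + ∑ j ∈ Finset.range k, p k • (B * (D ^ (k - 1 - j) * (C * X (n + j))))) := by
          refine Finset.sum_congr rfl fun k _ => ?_
          rw [key k, smul_add, smul_add, Finset.smul_sum]
      _ = _ := by
          rw [Finset.sum_add_distrib, Finset.sum_add_distrib, hvanish, add_zero]
  -- swap the double sum
  have hswap : ∑ k ∈ Finset.range (l + 1), ∑ j ∈ Finset.range k,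
        p k • (B * (D ^ (k - 1 - j) * (C * X (n + j))))
      = ∑ j ∈ Finset.range (l + 1), ∑ k ∈ Finset.Ico (j + 1) (l + 1),
        p k • (B * (D ^ (k - 1 - j) * (C * X (n + j)))) := by
    simp only [Finset.range_eq_Ico]
    exact (Finset.sum_Ico_Ico_comm' 0 (l + 1)
      (fun j k => p k • (B * (D ^ (k - 1 - j) * (C * X (n + j)))))).symm
  -- expand the RHS of the goal
  rw [Fin.sum_univ_eq_sum_range
    (fun i => (p i • A - (if i = 0 then 0 else p (i - 1) • (1 : Matrix (Fin a) (Fin a) ℝ))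
      + B * (∑ k ∈ Finset.Ico (i + 1) (l + 1), p k • D ^ (k - 1 - i)) * C) * X (n + i))]
  have hterm : ∀ i, (p i • A - (if i = 0 then 0 else p (i - 1) • (1 : Matrix (Fin a) (Fin a) ℝ))
      + B * (∑ k ∈ Finset.Ico (i + 1) (l + 1), p k • D ^ (k - 1 - i)) * C) * X (n + i)
      = p i • (A * X (n + i)) - (if i = 0 then 0 else p (i - 1) • X (n + i))
      + ∑ k ∈ Finset.Ico (i + 1) (l + 1), p k • (B * (D ^ (k - 1 - i) * (C * X (n + i)))) := by
    intro i
    rw [Matrix.add_mul, Matrix.sub_mul, Matrix.smul_mul]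
    congr 1
    · congr 1
      split
      · rw [Matrix.zero_mul]
      · rw [Matrix.smul_mul, Matrix.one_mul]
    · rw [Matrix.mul_assoc, Matrix.mul_assoc, Matrix.sum_mul, Matrix.mul_sum]
      refine Finset.sum_congr rfl fun k _ => ?_
      rw [Matrix.smul_mul, Matrix.mul_smul]
  simp_rw [hterm]
  rw [Finset.sum_add_distrib, Finset.sum_sub_distrib]
  have hmid : ∑ i ∈ Finset.range (l + 1), (if i = 0 then 0 else p (i - 1) • X (n + i))
      = ∑ k ∈ Finset.range l, p k • X (n + k + 1) := by
    rw [Finset.sum_range_succ']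
    simp [Nat.add_sub_cancel]
    exact Finset.sum_congr rfl fun k _ => by rw [← add_assoc]
  rw [hmid, ← hswap, sub_add_eq_add_sub, ← hexp, ← hS]
  abel
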